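/- arXiv:1611.09631 — 4 statements merged into one kernel-verified Lean document; each statement's English description precedes it below -/
import Mathlib

section
/- (Cover's theorem) Let ν be a Borel probability measure with full support on the closed d-simplex, and let prices satisfy c ≤ s^j_{t+1}/s^j_t ≤ C for all j, t. Define V_T(ν) = ∫_{Δ̄^d} V_T(b) dν(b) and V*_T = max_{b ∈ Δ̄^d} V_T(b). Then lim_{T→∞} (1/T) log(V_T(ν)/V*_T) = 0. -/
open Finset MeasureTheory



section aux
variable {d : ℕ}

/-- The closed simplex. -/
def Spx (d : ℕ) : Set (Fin d → ℝ) := {b | (∀ j, 0 ≤ b j) ∧ ∑ j, b j = 1}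

lemma Spx_closed : IsClosed (Spx d) := by
  have h1 : IsClosed {b : Fin d → ℝ | ∀ j, 0 ≤ b j} := by
    have : {b : Fin d → ℝ | ∀ j, 0 ≤ b j} = ⋂ j, {b | 0 ≤ b j} := by
      ext b; simp [Set.mem_iInter]
    rw [this]
    exact isClosed_iInter fun j => isClosed_le continuous_const (continuous_apply j)
  have h2 : IsClosed {b : Fin d → ℝ | ∑ j, b j = 1} :=
    isClosed_eq (by continuity) continuous_const
  exact h1.inter h2

lemma Spx_compact : IsCompact (Spx d) := by
  refine (isCompact_closedBall (0 : Fin d → ℝ) 1).of_isClosed_subset Spx_closed ?_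
  intro b hb
  rw [Metric.mem_closedBall, dist_pi_le_iff zero_le_one]
  intro j
  rw [Real.dist_eq, Pi.zero_apply, sub_zero, abs_of_nonneg (hb.1 j)]
  calc b j ≤ ∑ i, b i := Finset.single_le_sum (fun i _ => hb.1 i) (mem_univ j)
    _ = 1 := hb.2

lemma Spx_nonempty (hd : 0 < d) : (Spx d).Nonempty := by
  refine ⟨fun _ => 1 / d, fun j => by positivity, ?_⟩
  simp [Finset.sum_const]
  field_simp

end aux

section core
variable {d : ℕ} {c C : ℝ} {X : Fin d → ℕ → ℝ}

lemma factor_lb (hc : 0 < c) (hX : ∀ j t, c ≤ X j t ∧ X j t ≤ C)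
    {b : Fin d → ℝ} (hb : b ∈ Spx d) (t : ℕ) : c ≤ ∑ j, b j * X j t := by
  calc c = ∑ j, b j * c := by rw [← Finset.sum_mul, hb.2, one_mul]
    _ ≤ ∑ j, b j * X j t :=
      Finset.sum_le_sum fun j _ => mul_le_mul_of_nonneg_left (hX j t).1 (hb.1 j)

lemma factor_ub (hc : 0 < c) (hX : ∀ j t, c ≤ X j t ∧ X j t ≤ C)
    {b : Fin d → ℝ} (hb : b ∈ Spx d) (t : ℕ) : ∑ j, b j * X j t ≤ C := by
  calc ∑ j, b j * X j t ≤ ∑ j, b j * C :=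
      Finset.sum_le_sum fun j _ => mul_le_mul_of_nonneg_left (hX j t).2 (hb.1 j)
    _ = C := by rw [← Finset.sum_mul, hb.2, one_mul]

lemma prod_lb (hc : 0 < c) (hX : ∀ j t, c ≤ X j t ∧ X j t ≤ C)
    {b : Fin d → ℝ} (hb : b ∈ Spx d) (T : ℕ) :
    c ^ T ≤ ∏ t ∈ Finset.range T, ∑ j, b j * X j t := by
  calc c ^ T = ∏ _t ∈ Finset.range T, c := by rw [Finset.prod_const, Finset.card_range]
    _ ≤ _ := Finset.prod_le_prod (fun t _ => hc.le) (fun t _ => factor_lb hc hX hb t)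

lemma prod_ub (hc : 0 < c) (hX : ∀ j t, c ≤ X j t ∧ X j t ≤ C)
    {b : Fin d → ℝ} (hb : b ∈ Spx d) (T : ℕ) :
    ∏ t ∈ Finset.range T, ∑ j, b j * X j t ≤ C ^ T := by
  calc ∏ t ∈ Finset.range T, ∑ j, b j * X j t
      ≤ ∏ _t ∈ Finset.range T, C := Finset.prod_le_prod
        (fun t _ => le_trans hc.le (factor_lb hc hX hb t)) (fun t _ => factor_ub hc hX hb t)
    _ = C ^ T := by rw [Finset.prod_const, Finset.card_range]

/-- Lipschitz-type comparison: if `dist b b' ≤ δ` then the wealth of `b` is at least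
`(1-κ)^T` times the wealth of `b'`, where `κ = C*d*δ/c`. -/
lemma prod_compare (hc : 0 < c) (hcC : c ≤ C) (hX : ∀ j t, c ≤ X j t ∧ X j t ≤ C)
    {b b' : Fin d → ℝ} (hb : b ∈ Spx d) (hb' : b' ∈ Spx d)
    {κ : ℝ} (hκ0 : 0 ≤ κ) (hκ1 : κ ≤ 1)
    (hdist : ∀ j, |b j - b' j| ≤ κ * c / (C * d)) (hd : 0 < d) (T : ℕ) :
    (1 - κ) ^ T * ∏ t ∈ Finset.range T, ∑ j, b' j * X j t
      ≤ ∏ t ∈ Finset.range T, ∑ j, b j * X j t := by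
  have hC : 0 < C := hc.trans_le hcC
  have key : ∀ t, (1 - κ) * (∑ j, b' j * X j t) ≤ ∑ j, b j * X j t := by
    intro t
    have h1 : ∑ j, b j * X j t ≥ (∑ j, b' j * X j t) - κ * c := by
      have : ∑ j, b j * X j t - ∑ j, b' j * X j t = ∑ j, (b j - b' j) * X j t := by
        rw [← Finset.sum_sub_distrib]; congr 1; ext j; ring
      have hbd : ∑ j, (b j - b' j) * X j t ≥ -(κ * c) := by
        have : ∀ j ∈ Finset.univ, -(κ * c / d) ≤ (b j - b' j) * X j t := by
          intro j _
          have h2 : |(b j - b' j) * X j t| ≤ (κ * c / (C * d)) * C := by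
            rw [abs_mul]
            apply mul_le_mul (hdist j) _ (abs_nonneg _) (by positivity)
            rw [abs_of_pos (hc.trans_le (hX j t).1)]; exact (hX j t).2
          have h3 : (κ * c / (C * d)) * C = κ * c / d := by field_simp
          nlinarith [neg_abs_le ((b j - b' j) * X j t), h2]
        calc -(κ * c) = ∑ _j : Fin d, -(κ * c / d) := by
              rw [Finset.sum_const]; simp
              field_simp
          _ ≤ ∑ j, (b j - b' j) * X j t := Finset.sum_le_sum this
      linarith
    have h4 : κ * c ≤ κ * ∑ j, b' j * X j t :=
      mul_le_mul_of_nonneg_left (factor_lb hc hX hb' t) hκ0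
    nlinarith
  calc (1 - κ) ^ T * ∏ t ∈ Finset.range T, ∑ j, b' j * X j t
      = ∏ t ∈ Finset.range T, (1 - κ) * ∑ j, b' j * X j t := by
        rw [Finset.prod_mul_distrib, Finset.prod_const, Finset.card_range]
    _ ≤ ∏ t ∈ Finset.range T, ∑ j, b j * X j t := by
        refine Finset.prod_le_prod (fun t _ => ?_) (fun t _ => key t)
        have := factor_lb hc hX hb' t
        nlinarith

end core

lemma ball_measure_lb {d : ℕ} (hd : 0 < d) (ν : Measure (Fin d → ℝ)) [IsProbabilityMeasure ν]
    (hfull : ∀ U : Set (Fin d → ℝ), IsOpen U → (U ∩ Spx d).Nonempty → 0 < ν U)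
    {δ : ℝ} (hδ : 0 < δ) :
    ∃ m : ℝ, 0 < m ∧ ∀ b ∈ Spx d, m ≤ (ν (Metric.ball b δ)).toReal := by
  have hcover : Spx d ⊆ ⋃ i : Spx d, Metric.ball (i : Fin d → ℝ) (δ / 2) := by
    intro b hb
    exact Set.mem_iUnion.2 ⟨⟨b, hb⟩, Metric.mem_ball_self (by linarith)⟩
  obtain ⟨t, ht⟩ := Spx_compact.elim_finite_subcover
    (fun i : Spx d => Metric.ball (i : Fin d → ℝ) (δ / 2)) (fun i => Metric.isOpen_ball) hcover
  obtain ⟨b0, hb0⟩ := Spx_nonempty hd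
  have htne : t.Nonempty := by
    obtain ⟨i, hi, _⟩ := Set.mem_iUnion₂.1 (ht hb0)
    exact ⟨i, hi⟩
  refine ⟨t.inf' htne fun i => (ν (Metric.ball (i : Fin d → ℝ) (δ / 2))).toReal, ?_, ?_⟩
  · rw [Finset.lt_inf'_iff]
    intro i _
    exact ENNReal.toReal_pos
      (hfull _ Metric.isOpen_ball ⟨i, Metric.mem_ball_self (by linarith), i.2⟩).ne'
      (measure_ne_top ν _)
  · intro b hb
    obtain ⟨i, hi, hbi⟩ := Set.mem_iUnion₂.1 (ht hb)
    refine le_trans (Finset.inf'_le _ hi) (ENNReal.toReal_mono (measure_ne_top ν _)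
      (measure_mono ?_))
    intro x hx
    rw [Metric.mem_ball] at *
    calc dist x b ≤ dist x (i : Fin d → ℝ) + dist (i : Fin d → ℝ) b := dist_triangle _ _ _
      _ < δ / 2 + δ / 2 := by
          have := Metric.mem_ball.1 hbi
          rw [dist_comm (i : Fin d → ℝ) b]
          exact add_lt_add hx this
      _ = δ := by ring

theorem cover_aux (d : ℕ) (hd : 0 < d) (c C : ℝ) (hc : 0 < c) (hcC : c ≤ C)
    (X : Fin d → ℕ → ℝ) (hX : ∀ j t, c ≤ X j t ∧ X j t ≤ C)
    (ν : Measure (Fin d → ℝ)) [IsProbabilityMeasure ν]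
    (hsupp : ν {b : Fin d → ℝ | ¬ ((∀ j, 0 ≤ b j) ∧ ∑ j, b j = 1)} = 0)
    (hfull : ∀ U : Set (Fin d → ℝ), IsOpen U →
      (U ∩ {b : Fin d → ℝ | (∀ j, 0 ≤ b j) ∧ ∑ j, b j = 1}).Nonempty → 0 < ν U) :
    Filter.Tendsto (fun T : ℕ =>
      (1 / T : ℝ) * Real.log
        ((∫ b in {b : Fin d → ℝ | (∀ j, 0 ≤ b j) ∧ ∑ j, b j = 1},
            (∏ t ∈ Finset.range T, ∑ j, b j * X j t) ∂ν) /
         (⨆ b : {b : Fin d → ℝ // (∀ j, 0 ≤ b j) ∧ ∑ j, b j = 1},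
            ∏ t ∈ Finset.range T, ∑ j, (b : Fin d → ℝ) j * X j t)))
      Filter.atTop (nhds 0) := by
  have hC : 0 < C := hc.trans_le hcC
  have hSset : {b : Fin d → ℝ | (∀ j, 0 ≤ b j) ∧ ∑ j, b j = 1} = Spx d := rfl
  have hScompl : ν (Spx d)ᶜ = 0 := hsupp
  have hSmeas : MeasurableSet (Spx d) := Spx_closed.measurableSet
  have hνS : ν (Spx d) = 1 := by
    have h := measure_add_measure_compl (μ := ν) hSmeas
    rw [hScompl, add_zero, measure_univ] at h
    exact h
  set f : ℕ → (Fin d → ℝ) → ℝ := fun T b => ∏ t ∈ Finset.range T, ∑ j, b j * X j t with hf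
  have hfcont : ∀ T, Continuous (f T) := by
    intro T
    apply continuous_finset_prod
    intro t _
    exact continuous_finset_sum _ fun j _ => (continuous_apply j).mul continuous_const
  have hInt : ∀ T, IntegrableOn (f T) (Spx d) ν :=
    fun T => (hfcont T).continuousOn.integrableOn_compact Spx_compact
  rw [hSset, Metric.tendsto_atTop]
  intro ε hε
  -- choose κ and δ
  set κ : ℝ := 1 - Real.exp (-(ε / 2)) with hκdef
  have hexp1 : Real.exp (-(ε / 2)) < 1 := Real.exp_lt_one_iff.2 (by linarith)
  have hexp0 : 0 < Real.exp (-(ε / 2)) := Real.exp_pos _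
  have hκ0 : 0 < κ := by simp only [hκdef]; linarith
  have hκ1 : κ < 1 := by simp only [hκdef]; linarith
  have h1κ : 1 - κ = Real.exp (-(ε / 2)) := by simp only [hκdef]; ring
  set δ : ℝ := κ * c / (C * d) with hδdef
  have hδ : 0 < δ := by
    apply div_pos (mul_pos hκ0 hc)
    exact mul_pos hC (by exact_mod_cast hd)
  obtain ⟨m, hm, hmball⟩ := ball_measure_lb hd ν hfull hδ
  obtain ⟨N0, hN0⟩ := exists_nat_gt (2 * |Real.log m| / ε)
  refine ⟨max N0 1, fun T hT => ?_⟩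
  have hT1 : 1 ≤ T := le_trans (le_max_right _ _) hT
  have hTpos : (0 : ℝ) < T := by exact_mod_cast hT1
  have hTN0 : (N0 : ℝ) ≤ T := by exact_mod_cast le_trans (le_max_left _ _) hT
  -- maximizer
  obtain ⟨bm, hbmS, hbm⟩ := Spx_compact.exists_isMaxOn (Spx_nonempty hd) (hfcont T).continuousOn
  have hbmle : ∀ b ∈ Spx d, f T b ≤ f T bm := hbm
  have hfbm_pos : 0 < f T bm := lt_of_lt_of_le (pow_pos hc T) (prod_lb hc hX hbmS T)
  -- the sup equals the max
  set Vs : ℝ := ⨆ b : {b : Fin d → ℝ // (∀ j, 0 ≤ b j) ∧ ∑ j, b j = 1},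
      ∏ t ∈ Finset.range T, ∑ j, (b : Fin d → ℝ) j * X j t with hVsdef
  have hVs : Vs = f T bm := by
    haveI : Nonempty {b : Fin d → ℝ // (∀ j, 0 ≤ b j) ∧ ∑ j, b j = 1} := ⟨⟨bm, hbmS⟩⟩
    apply le_antisymm
    · exact ciSup_le fun x => hbmle x x.2
    · exact le_ciSup ⟨f T bm, by rintro _ ⟨x, rfl⟩; exact hbmle x x.2⟩
        (⟨bm, hbmS⟩ : {b : Fin d → ℝ // (∀ j, 0 ≤ b j) ∧ ∑ j, b j = 1})
  set A : ℝ := ∫ b in Spx d, f T b ∂ν with hAdef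
  -- upper bound A ≤ Vs
  have hA_le : A ≤ f T bm := by
    have h1 : A ≤ ∫ _b in Spx d, f T bm ∂ν :=
      setIntegral_mono_on (hInt T) (integrableOn_const (by
        rw [hνS]; exact ENNReal.one_ne_top)) hSmeas (fun b hb => hbmle b hb)
    rwa [setIntegral_const, measureReal_def, hνS, ENNReal.toReal_one, one_smul] at h1
  -- lower bound
  set B : Set (Fin d → ℝ) := Metric.ball bm δ with hBdef
  have hνB : ν (B ∩ Spx d) = ν B := measure_inter_conull hScompl
  have hmB : m ≤ (ν (B ∩ Spx d)).toReal := by rw [hνB]; exact hmball bm hbmS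
  have hstep1 : ∀ b ∈ B ∩ Spx d, (1 - κ) ^ T * f T bm ≤ f T b := by
    rintro b ⟨hbB, hbS⟩
    refine prod_compare hc hcC hX hbS hbmS hκ0.le hκ1.le ?_ hd T
    intro j
    calc |b j - bm j| = dist (b j) (bm j) := (Real.dist_eq _ _).symm
      _ ≤ dist b bm := dist_le_pi_dist b bm j
      _ ≤ κ * c / (C * d) := le_of_lt (by rw [← hδdef]; exact Metric.mem_ball.1 hbB)
  have hstep2 : ((1 - κ) ^ T * f T bm) * (ν (B ∩ Spx d)).toReal ≤ ∫ b in B ∩ Spx d, f T b ∂ν :=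
    setIntegral_ge_of_const_le_real (Metric.isOpen_ball.measurableSet.inter hSmeas)
      (measure_ne_top ν _) hstep1 ((hInt T).mono_set Set.inter_subset_right)
  have hstep3 : ∫ b in B ∩ Spx d, f T b ∂ν ≤ A := by
    refine setIntegral_mono_set (hInt T) ?_ (HasSubset.Subset.eventuallyLE Set.inter_subset_right)
    filter_upwards [ae_restrict_mem hSmeas] with b hb
    exact le_trans (pow_nonneg hc.le T) (prod_lb hc hX hb T)
  have hKpos : 0 < (1 - κ) ^ T * f T bm :=
    mul_pos (pow_pos (by linarith) T) hfbm_pos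
  have hA_ge : m * ((1 - κ) ^ T * f T bm) ≤ A := by
    calc m * ((1 - κ) ^ T * f T bm) ≤ (ν (B ∩ Spx d)).toReal * ((1 - κ) ^ T * f T bm) :=
          mul_le_mul_of_nonneg_right hmB hKpos.le
      _ = ((1 - κ) ^ T * f T bm) * (ν (B ∩ Spx d)).toReal := by ring
      _ ≤ ∫ b in B ∩ Spx d, f T b ∂ν := hstep2
      _ ≤ A := hstep3
  have hApos : 0 < A := lt_of_lt_of_le (mul_pos hm hKpos) hA_ge
  -- log computations
  have hlogA_le : Real.log A ≤ Real.log (f T bm) := Real.log_le_log hApos hA_le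
  have hlogA_ge : Real.log m + (T * (-(ε / 2)) + Real.log (f T bm)) ≤ Real.log A := by
    have h := Real.log_le_log (mul_pos hm hKpos) hA_ge
    rw [Real.log_mul hm.ne' hKpos.ne', Real.log_mul (pow_pos (by linarith : (0:ℝ) < 1 - κ) T).ne'
      hfbm_pos.ne', Real.log_pow, h1κ, Real.log_exp] at h
    linarith [h]
  have hm1 : m ≤ 1 := by
    refine le_trans (hmball bm hbmS) ?_
    calc (ν (Metric.ball bm δ)).toReal ≤ (ν Set.univ).toReal :=
          ENNReal.toReal_mono (measure_ne_top ν _) (measure_mono (Set.subset_univ _))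
      _ = 1 := by rw [measure_univ, ENNReal.toReal_one]
  have hlogm : Real.log m ≤ 0 := Real.log_nonpos hm.le hm1
  have hlogm_lb : -(T * (ε / 2)) < Real.log m := by
    have h1 : 2 * |Real.log m| / ε < T := lt_of_lt_of_le hN0 hTN0
    have h2 : 2 * |Real.log m| < T * ε := by
      rw [div_lt_iff₀ hε] at h1; linarith
    have h3 : -Real.log m ≤ |Real.log m| := neg_le_abs _
    nlinarith
  -- conclude
  rw [Real.dist_eq, sub_zero]
  rw [Real.log_div hApos.ne' (by rw [hVs]; exact hfbm_pos.ne')]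
  rw [hVs]
  have hub : (1 / T : ℝ) * (Real.log A - Real.log (f T bm)) ≤ 0 := by
    apply mul_nonpos_of_nonneg_of_nonpos (by positivity)
    linarith
  have hlb : -ε < (1 / T : ℝ) * (Real.log A - Real.log (f T bm)) := by
    have h1 : Real.log A - Real.log (f T bm) ≥ Real.log m - T * (ε / 2) := by linarith
    have h2 : Real.log A - Real.log (f T bm) > -(T * (ε / 2)) - T * (ε / 2) := by linarith
    have h3 : (1 / T : ℝ) * (Real.log A - Real.log (f T bm)) >
        (1 / T : ℝ) * (-(T * (ε / 2)) - T * (ε / 2)) := by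
      apply mul_lt_mul_of_pos_left h2 (by positivity)
    calc -ε = (1 / T : ℝ) * (-(T * (ε / 2)) - T * (ε / 2)) := by field_simp; ring
      _ < _ := h3
  rw [abs_lt]
  constructor
  · exact hlb
  · linarith

/-- Cover's theorem: for a full-support Borel probability measure `ν` on the closed
`d`-simplex and prices whose one-period ratios lie in `[c, C]`, the universal portfolio
wealth `V_T(ν) = ∫ V_T(b) dν(b)` satisfies `(1/T) log (V_T(ν) / V*_T) → 0`, where
`V*_T = sup_{b} V_T(b)`. -/
theorem stmt_5 (d : ℕ) (hd : 0 < d) (c C : ℝ) (hc : 0 < c) (hcC : c ≤ C)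
    (s : Fin d → ℕ → ℝ) (hs : ∀ j t, 0 < s j t)
    (hratio : ∀ j t, c ≤ s j (t + 1) / s j t ∧ s j (t + 1) / s j t ≤ C)
    (ν : Measure (Fin d → ℝ)) [IsProbabilityMeasure ν]
    (hsupp : ν {b : Fin d → ℝ | ¬ ((∀ j, 0 ≤ b j) ∧ ∑ j, b j = 1)} = 0)
    (hfull : ∀ U : Set (Fin d → ℝ), IsOpen U →
      (U ∩ {b : Fin d → ℝ | (∀ j, 0 ≤ b j) ∧ ∑ j, b j = 1}).Nonempty → 0 < ν U) :
    Filter.Tendsto (fun T : ℕ =>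
      (1 / T : ℝ) * Real.log
        ((∫ b in {b : Fin d → ℝ | (∀ j, 0 ≤ b j) ∧ ∑ j, b j = 1},
            (∏ t ∈ Finset.range T, ∑ j, b j * (s j (t + 1) / s j t)) ∂ν) /
         (⨆ b : {b : Fin d → ℝ // (∀ j, 0 ≤ b j) ∧ ∑ j, b j = 1},
            ∏ t ∈ Finset.range T, ∑ j, (b : Fin d → ℝ) j * (s j (t + 1) / s j t))))
      Filter.atTop (nhds 0) := by
  exact cover_aux d hd c C hc hcC (fun j t => s j (t + 1) / s j t) hratio ν hsupp hfull
end

section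
/- (Model-free universal portfolio theorem for Lipschitz maps) Fix M > 0 and a Borel probability measure ν with full support on the compact metric space (𝓛^M, ‖·‖_∞). Define V^M_T(ν) = ∫_{𝓛^M} V^π_T dν(π) and V^{*,M}_T = sup_{π ∈ 𝓛^M} V^π_T. Then for every sequence (μ_t)_{t=0}^∞ in the open simplex Δ^d, lim_{T→∞} (1/T)(log V^{*,M}_T − log V^M_T(ν)) = 0. -/
open Finset MeasureTheory
open scoped ENNReal

noncomputable section

/-- `ℝ^d` with the ℓ¹-norm. -/
abbrev L1 (d : ℕ) := PiLp 1 (fun _ : Fin d => ℝ)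

/-- The open unit simplex inside `ℝ^d` with the ℓ¹-norm. -/
def openSimplex (d : ℕ) : Set (L1 d) := {x | (∀ i, 0 < x i) ∧ ∑ i, x i = 1}

/-- The set `𝓛^M` of `M`-Lipschitz maps from `Δ^d` to `Δ̄^d_{M⁻¹}`, as bounded continuous
functions with the sup-ℓ¹-norm. -/
def LM (d : ℕ) (M : ℝ) : Set (BoundedContinuousFunction (openSimplex d) (L1 d)) :=
  {f | LipschitzWith (Real.toNNReal M) f ∧
    ∀ x : openSimplex d, (∀ i, 1 / (M * d) ≤ f x i) ∧ ∑ i, f x i = 1}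

lemma L1.dist_eq {d : ℕ} (x y : L1 d) : dist x y = ∑ i, |x i - y i| := by
  rw [PiLp.dist_eq_sum (by norm_num : 0 < (1:ℝ≥0∞).toReal)]
  simp [Real.dist_eq]

lemma L1.norm_eq {d : ℕ} (x : L1 d) : ‖x‖ = ∑ i, |x i| := by
  rw [PiLp.norm_eq_sum (by norm_num : 0 < (1:ℝ≥0∞).toReal)]
  simp [Real.norm_eq_abs]

lemma lm_pos {d : ℕ} {M : ℝ} (hd : 0 < d) (hM : 0 < M)
    {f : BoundedContinuousFunction (openSimplex d) (L1 d)} (hf : f ∈ LM d M)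
    (x : openSimplex d) (i : Fin d) : 0 < f x i :=
  lt_of_lt_of_le (by positivity) ((hf.2 x).1 i)

lemma lm_norm {d : ℕ} {M : ℝ} (hd : 0 < d) (hM : 0 < M)
    {f : BoundedContinuousFunction (openSimplex d) (L1 d)} (hf : f ∈ LM d M)
    (x : openSimplex d) : ‖f x‖ = 1 := by
  rw [L1.norm_eq]
  rw [← (hf.2 x).2]
  exact Finset.sum_congr rfl fun i _ => abs_of_pos (lm_pos hd hM hf x i)

lemma lm_net {d : ℕ} {M : ℝ} (hd : 0 < d) (hM : 0 < M)
    (hne : (LM d M).Nonempty) {ε : ℝ} (hε : 0 < ε) :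
    ∃ F : Set (BoundedContinuousFunction (openSimplex d) (L1 d)),
      F.Finite ∧ F ⊆ LM d M ∧ ∀ g ∈ LM d M, ∃ f ∈ F, dist g f < ε := by
  classical
  set E := BoundedContinuousFunction (openSimplex d) (L1 d)
  set ε' : ℝ := ε / (8 * (M + 1)) with hε'def
  have hε' : 0 < ε' := by positivity
  have hMε' : M * ε' ≤ ε / 8 := by
    rw [hε'def, ← mul_div_assoc, div_le_div_iff₀ (by positivity) (by norm_num : (0:ℝ) < 8)]
    nlinarith [hε.le, hM.le]
  have hS : openSimplex d ⊆ Metric.closedBall (0 : L1 d) 1 := by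
    intro x hx
    rw [Metric.mem_closedBall, dist_zero_right, L1.norm_eq]
    rw [Finset.sum_congr rfl fun i _ => abs_of_pos (hx.1 i), hx.2]
  have TBS : TotallyBounded (openSimplex d) :=
    ((isCompact_closedBall _ _).totallyBounded).subset hS
  obtain ⟨t, hts, htf, htc⟩ :=
    totallyBounded_iff_subset.1 TBS _ (Metric.dist_mem_uniformity hε')
  haveI : Fintype ↥t := htf.fintype
  set Φ : E → (↥t → L1 d) := fun f z => f ⟨z.1, hts z.2⟩ with hΦdef
  have himg : Φ '' LM d M ⊆ Set.pi Set.univ (fun _ : ↥t => Metric.closedBall (0:L1 d) 1) := by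
    rintro _ ⟨f, hf, rfl⟩ z _
    rw [Metric.mem_closedBall, dist_zero_right, lm_norm hd hM hf]
  have TBimg : TotallyBounded (Φ '' LM d M) :=
    ((isCompact_univ_pi fun _ => isCompact_closedBall _ _).totallyBounded).subset himg
  obtain ⟨G, hGsub, hGfin, hGcov⟩ :=
    totallyBounded_iff_subset.1 TBimg _
      (Metric.dist_mem_uniformity (show (0:ℝ) < ε/4 by linarith))
  obtain ⟨f₀, hf₀⟩ := hne
  set ψ : (↥t → L1 d) → E := fun y => if h : y ∈ Φ '' LM d M then h.choose else f₀ with hψdef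
  have hψ : ∀ y ∈ G, ψ y ∈ LM d M ∧ Φ (ψ y) = y := by
    intro y hy
    have h := hGsub hy
    simp only [hψdef, dif_pos h]
    exact ⟨h.choose_spec.1, h.choose_spec.2⟩
  refine ⟨ψ '' G, hGfin.image _, ?_, ?_⟩
  · rintro _ ⟨y, hy, rfl⟩; exact (hψ y hy).1
  · intro g hg
    have hmem : Φ g ∈ Φ '' LM d M := Set.mem_image_of_mem _ hg
    obtain ⟨y, hyG, hdy⟩ := Set.mem_iUnion₂.1 (hGcov hmem)
    refine ⟨ψ y, Set.mem_image_of_mem _ hyG, ?_⟩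
    have hΦψ : Φ (ψ y) = y := (hψ y hyG).2
    have claim : ∀ x : openSimplex d, dist (g x) (ψ y x) ≤ ε / 2 := by
      intro x
      obtain ⟨z, hzt, hz⟩ := Set.mem_iUnion₂.1 (htc x.2)
      have hz' : dist (x : L1 d) z < ε' := hz
      set xz : openSimplex d := ⟨z, hts hzt⟩ with hxzdef
      have hdxxz : dist x xz ≤ ε' := by
        rw [Subtype.dist_eq]; exact hz'.le
      have h1 : dist (g x) (g xz) ≤ M * ε' := by
        calc dist (g x) (g xz) ≤ (Real.toNNReal M : ℝ) * dist x xz := hg.1.dist_le_mul x xz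
        _ ≤ M * ε' := by
            rw [Real.coe_toNNReal M hM.le]
            exact mul_le_mul_of_nonneg_left hdxxz hM.le
      have h3 : dist (ψ y xz) (ψ y x) ≤ M * ε' := by
        calc dist (ψ y xz) (ψ y x) ≤ (Real.toNNReal M : ℝ) * dist xz x :=
              ((hψ y hyG).1).1.dist_le_mul xz x
        _ ≤ M * ε' := by
            rw [Real.coe_toNNReal M hM.le]
            refine mul_le_mul_of_nonneg_left ?_ hM.le
            rw [dist_comm]; exact hdxxz
      have h2 : dist (g xz) (ψ y xz) ≤ ε / 4 := by
        have hdy' : dist (Φ g) y < ε / 4 := hdy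
        have h := dist_le_pi_dist (Φ g) y ⟨z, hzt⟩
        have h' : dist (Φ g ⟨z, hzt⟩) (y ⟨z, hzt⟩) ≤ ε / 4 := h.trans hdy'.le
        rw [← hΦψ] at h'
        exact h'
      calc dist (g x) (ψ y x)
          ≤ dist (g x) (g xz) + dist (g xz) (ψ y xz) + dist (ψ y xz) (ψ y x) :=
            dist_triangle4 _ _ _ _
        _ ≤ M * ε' + ε / 4 + M * ε' := by gcongr
        _ ≤ ε / 2 := by linarith
    calc dist g (ψ y) ≤ ε / 2 :=
          (BoundedContinuousFunction.dist_le (by linarith)).2 claim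
      _ < ε := by linarith

lemma lm_compare {d : ℕ} {M : ℝ} (hd : 0 < d) (hM : 0 < M)
    {f g : BoundedContinuousFunction (openSimplex d) (L1 d)}
    (hf : f ∈ LM d M) (hg : g ∈ LM d M) {ε : ℝ} (hε : 0 ≤ ε) (hdist : dist f g ≤ ε)
    (x : openSimplex d) {r : Fin d → ℝ} (hr : ∀ j, 0 < r j) :
    (1 - M * d * ε) * (∑ j, f x j * r j) ≤ ∑ j, g x j * r j := by
  have hMd : (0:ℝ) < M * d := by positivity
  haveI : Nonempty (Fin d) := ⟨⟨0, hd⟩⟩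
  set A := ∑ j, f x j * r j with hA
  have hApos : 0 < A :=
    Finset.sum_pos (fun j _ => mul_pos (lm_pos hd hM hf x j) (hr j)) Finset.univ_nonempty
  have hterm : ∀ j, f x j * r j ≤ A := fun j =>
    Finset.single_le_sum (fun k _ => (mul_pos (lm_pos hd hM hf x k) (hr k)).le)
      (Finset.mem_univ j)
  have hrA : ∀ j, r j ≤ M * d * A := by
    intro j
    have h1 : 1 / (M * d) * r j ≤ A :=
      le_trans (mul_le_mul_of_nonneg_right ((hf.2 x).1 j) (hr j).le) (hterm j)
    have h2 := mul_le_mul_of_nonneg_left h1 hMd.le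
    rwa [← mul_assoc, mul_one_div_cancel hMd.ne', one_mul] at h2
  have hsum : ∑ j, |g x j - f x j| ≤ ε := by
    have h1 : (∑ j, |g x j - f x j|) = dist (g x) (f x) := (L1.dist_eq _ _).symm
    rw [h1]
    calc dist (g x) (f x) ≤ dist g f := BoundedContinuousFunction.dist_coe_le_dist x
      _ = dist f g := dist_comm _ _
      _ ≤ ε := hdist
  have habs : |∑ j, (g x j - f x j) * r j| ≤ M * d * A * ε := by
    calc |∑ j, (g x j - f x j) * r j| ≤ ∑ j, |(g x j - f x j) * r j| :=
          Finset.abs_sum_le_sum_abs _ _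
      _ = ∑ j, |g x j - f x j| * r j := by
          refine Finset.sum_congr rfl fun j _ => ?_
          rw [abs_mul, abs_of_pos (hr j)]
      _ ≤ ∑ j, |g x j - f x j| * (M * d * A) :=
          Finset.sum_le_sum fun j _ => mul_le_mul_of_nonneg_left (hrA j) (abs_nonneg _)
      _ = (∑ j, |g x j - f x j|) * (M * d * A) := by rw [← Finset.sum_mul]
      _ ≤ ε * (M * d * A) := mul_le_mul_of_nonneg_right hsum (by positivity)
      _ = M * d * A * ε := by ring
  have hsplit : ∑ j, g x j * r j = A + ∑ j, (g x j - f x j) * r j := by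
    rw [hA, ← Finset.sum_add_distrib]
    exact Finset.sum_congr rfl fun j _ => by ring
  have hneg := neg_abs_le (∑ j, (g x j - f x j) * r j)
  rw [hsplit]
  nlinarith [habs, hneg]

lemma lm_w_le {d : ℕ} {M : ℝ} (hd : 0 < d) (hM : 0 < M)
    {f : BoundedContinuousFunction (openSimplex d) (L1 d)} (hf : f ∈ LM d M)
    (x : openSimplex d) {r : Fin d → ℝ} (hr : ∀ j, 0 < r j) :
    (∑ j, f x j * r j) ≤ ∑ j, r j := by
  refine Finset.sum_le_sum fun j _ => ?_
  have hle1 : f x j ≤ 1 := by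
    rw [← (hf.2 x).2]
    exact Finset.single_le_sum (fun k _ => (lm_pos hd hM hf x k).le) (Finset.mem_univ j)
  calc f x j * r j ≤ 1 * r j := mul_le_mul_of_nonneg_right hle1 (hr j).le
    _ = r j := one_mul _

/-- Model-free universal portfolio theorem for Lipschitz portfolio maps: for any
full-support Borel probability measure `ν` on `𝓛^M` and every trajectory `(μ_t)` in the
open simplex, `(1/T)(log V^{*,M}_T - log V^M_T(ν)) → 0`, where
`V^M_T(ν) = ∫ V^π_T dν(π)` and `V^{*,M}_T = sup_{π ∈ 𝓛^M} V^π_T`. -/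
theorem stmt_9 (d : ℕ) (hd : 0 < d) (M : ℝ) (hM : 0 < M)
    [MeasurableSpace (BoundedContinuousFunction (openSimplex d) (L1 d))]
    [BorelSpace (BoundedContinuousFunction (openSimplex d) (L1 d))]
    (ν : Measure (BoundedContinuousFunction (openSimplex d) (L1 d)))
    [IsProbabilityMeasure ν]
    (hsupp : ν (LM d M)ᶜ = 0)
    (hfull : ∀ U : Set (BoundedContinuousFunction (openSimplex d) (L1 d)),
      IsOpen U → (U ∩ LM d M).Nonempty → 0 < ν U)
    (μ : ℕ → openSimplex d) :
    Filter.Tendsto (fun T : ℕ =>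
      (1 / T : ℝ) *
        (Real.log (⨆ π : LM d M,
            ∏ t ∈ Finset.range T,
              ∑ j, (π : BoundedContinuousFunction (openSimplex d) (L1 d)) (μ t) j
                * ((μ (t + 1) : L1 d) j / (μ t : L1 d) j))
          - Real.log (∫ π in LM d M,
              (∏ t ∈ Finset.range T,
                ∑ j, π (μ t) j * ((μ (t + 1) : L1 d) j / (μ t : L1 d) j)) ∂ν)))
      Filter.atTop (nhds 0) := by
  classical
  have hdR : (0:ℝ) < d := Nat.cast_pos.2 hd
  haveI : Nonempty (Fin d) := ⟨⟨0, hd⟩⟩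
  by_cases hM1 : 1 ≤ M
  · -- the interesting case : `LM d M` is nonempty
    have hMd : (0:ℝ) < M * d := by positivity
    have hae : ∀ᵐ π ∂ν, π ∈ LM d M := by
      rw [ae_iff]; exact hsupp
    have hrest : ν.restrict (LM d M) = ν := Measure.restrict_eq_self_of_ae_mem hae
    rw [show ν.restrict (LM d M) = ν from hrest]
    let r : ℕ → Fin d → ℝ := fun t j => (μ (t+1) : L1 d) j / (μ t : L1 d) j
    have hr : ∀ t j, 0 < r t j := fun t j => div_pos ((μ (t+1)).2.1 j) ((μ t).2.1 j)
    let V : ℕ → (BoundedContinuousFunction (openSimplex d) (L1 d)) → ℝ :=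
      fun T π => ∏ t ∈ Finset.range T, ∑ j, π (μ t) j * r t j
    let S : ℕ → ℝ := fun T => ⨆ π : LM d M, V T π
    let I : ℕ → ℝ := fun T => ∫ π, V T π ∂ν
    show Filter.Tendsto (fun T : ℕ => (1 / T : ℝ) * (Real.log (S T) - Real.log (I T)))
      Filter.atTop (nhds 0)
    -- `LM d M` is nonempty
    have hne : (LM d M).Nonempty := by
      refine ⟨BoundedContinuousFunction.const _ (WithLp.toLp 1 (fun _ => (d:ℝ)⁻¹) : L1 d),
        LipschitzWith.const' _, fun x => ⟨fun i => ?_, ?_⟩⟩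
      · show 1 / (M * d) ≤ (d:ℝ)⁻¹
        rw [one_div]
        exact inv_anti₀ hdR (by nlinarith)
      · show ∑ _i : Fin d, (d:ℝ)⁻¹ = 1
        rw [Finset.sum_const, Finset.card_univ, Fintype.card_fin, nsmul_eq_mul]
        field_simp
    obtain ⟨π₀, hπ₀⟩ := hne
    haveI : Nonempty ↥(LM d M) := ⟨⟨π₀, hπ₀⟩⟩
    -- basic estimates
    have hwpos : ∀ (t : ℕ) ⦃π : BoundedContinuousFunction (openSimplex d) (L1 d)⦄,
        π ∈ LM d M → 0 < ∑ j, π (μ t) j * r t j := fun t π hπ =>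
      Finset.sum_pos (fun j _ => mul_pos (lm_pos hd hM hπ _ j) (hr t j)) Finset.univ_nonempty
    have hVpos : ∀ (T : ℕ) ⦃π : BoundedContinuousFunction (openSimplex d) (L1 d)⦄,
        π ∈ LM d M → 0 < V T π := fun T π hπ =>
      Finset.prod_pos fun t _ => hwpos t hπ
    let R : ℕ → ℝ := fun T => ∏ t ∈ Finset.range T, ∑ j, r t j
    have hVle : ∀ (T : ℕ) ⦃π : BoundedContinuousFunction (openSimplex d) (L1 d)⦄,
        π ∈ LM d M → V T π ≤ R T := fun T π hπ =>
      Finset.prod_le_prod (fun t _ => (hwpos t hπ).le) (fun t _ => lm_w_le hd hM hπ _ (hr t))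
    have hbdd : ∀ T : ℕ, BddAbove (Set.range fun π : LM d M => V T π) := fun T =>
      ⟨R T, by rintro _ ⟨π, rfl⟩; exact hVle T π.2⟩
    have hciSup : ∀ (T : ℕ) ⦃π : BoundedContinuousFunction (openSimplex d) (L1 d)⦄,
        π ∈ LM d M → V T π ≤ S T := fun T π hπ => le_ciSup (hbdd T) ⟨π, hπ⟩
    have hSpos : ∀ T, 0 < S T := fun T => lt_of_lt_of_le (hVpos T hπ₀) (hciSup T hπ₀)
    have hVcont : ∀ T, Continuous (V T) := fun T =>
      continuous_finset_prod _ fun t _ => continuous_finset_sum _ fun j _ =>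
        (((PiLp.proj (𝕜 := ℝ) (p := 1) (β := fun _ : Fin d => ℝ) j).continuous).comp
          (continuous_eval_const _)).mul continuous_const
    have hVint : ∀ T, Integrable (V T) ν := fun T =>
      ⟨(hVcont T).aestronglyMeasurable,
        HasFiniteIntegral.of_bounded (C := R T) (hae.mono fun π hπ => by
          rw [Real.norm_eq_abs, abs_of_pos (hVpos T hπ)]; exact hVle T hπ)⟩
    have hIleS : ∀ T, I T ≤ S T := fun T => by
      have h := integral_mono_ae (hVint T) (integrable_const (S T))
        (hae.mono fun π hπ => hciSup T hπ)
      simpa using h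
    -- the quantitative estimate
    rw [Metric.tendsto_atTop]
    intro ε' hε'
    set e : ℝ := Real.exp (-(ε'/2)) with hedef
    have hepos : 0 < e := Real.exp_pos _
    have he1 : e < 1 := Real.exp_lt_one_iff.2 (by linarith)
    set ε : ℝ := (1 - e) / (M * d) with hεdef
    have hεpos : 0 < ε := div_pos (by linarith) hMd
    have hc : 1 - M * d * ε = e := by
      rw [hεdef]
      field_simp
      ring
    obtain ⟨F, hFfin, hFsub, hFcov⟩ := lm_net hd hM ⟨π₀, hπ₀⟩ (half_pos hεpos)
    have hFne : F.Nonempty := by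
      obtain ⟨f, hf, -⟩ := hFcov π₀ hπ₀; exact ⟨f, hf⟩
    have hFsne : hFfin.toFinset.Nonempty := by
      rwa [Set.Finite.toFinset_nonempty]
    set δ : ℝ := hFfin.toFinset.inf' hFsne (fun f => (ν (Metric.ball f (ε/2))).toReal) with hδdef
    have hδpos : 0 < δ := by
      rw [hδdef, Finset.lt_inf'_iff]
      intro f hf
      have hfLM : f ∈ LM d M := hFsub (hFfin.mem_toFinset.1 hf)
      have h0 : 0 < ν (Metric.ball f (ε/2)) :=
        hfull _ Metric.isOpen_ball ⟨f, Metric.mem_ball_self (half_pos hεpos), hfLM⟩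
      exact ENNReal.toReal_pos h0.ne' (measure_ne_top ν _)
    have hδle1 : δ ≤ 1 := by
      obtain ⟨f, hf⟩ := hFsne
      refine le_trans (Finset.inf'_le _ hf) ?_
      calc (ν (Metric.ball f (ε/2))).toReal ≤ (1 : ℝ≥0∞).toReal :=
            ENNReal.toReal_mono ENNReal.one_ne_top prob_le_one
        _ = 1 := by simp
    have hδball : ∀ π ∈ LM d M, δ ≤ (ν (Metric.ball π ε)).toReal := by
      intro π hπ
      obtain ⟨f, hfF, hdf⟩ := hFcov π hπ
      have hsub : Metric.ball f (ε/2) ⊆ Metric.ball π ε := by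
        intro q hq
        rw [Metric.mem_ball] at *
        calc dist q π ≤ dist q f + dist f π := dist_triangle _ _ _
          _ < ε/2 + ε/2 := add_lt_add hq (by rwa [dist_comm] at hdf)
          _ = ε := add_halves ε
      exact le_trans (Finset.inf'_le _ (hFfin.mem_toFinset.2 hfF))
        (ENNReal.toReal_mono (measure_ne_top ν _) (measure_mono hsub))
    -- key lower bound for the integral
    have hkey : ∀ T : ℕ, e ^ T * (S T / 2) * δ ≤ I T := by
      intro T
      obtain ⟨π₁, hπ₁⟩ := exists_lt_of_lt_ciSup
        (show S T / 2 < S T by linarith [hSpos T])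
      set B := Metric.ball (π₁ : BoundedContinuousFunction (openSimplex d) (L1 d)) ε with hB
      have hBmeas : MeasurableSet B := Metric.isOpen_ball.measurableSet
      have hlow : ∀ π, π ∈ LM d M → π ∈ B → e ^ T * (S T / 2) ≤ V T π := by
        intro π hπ hπB
        have hdist : dist (π₁ : BoundedContinuousFunction (openSimplex d) (L1 d)) π ≤ ε := by
          rw [dist_comm]; exact (Metric.mem_ball.1 hπB).le
        have hprod : (∏ t ∈ Finset.range T,
            (e * ∑ j, (π₁ : BoundedContinuousFunction (openSimplex d) (L1 d)) (μ t) j * r t j))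
            ≤ V T π := by
          refine Finset.prod_le_prod
            (fun t _ => mul_nonneg hepos.le (hwpos t π₁.2).le) (fun t _ => ?_)
          have h := lm_compare hd hM π₁.2 hπ hεpos.le hdist (μ t) (hr t)
          rwa [hc] at h
        rw [Finset.prod_mul_distrib, Finset.prod_const, Finset.card_range] at hprod
        calc e ^ T * (S T / 2) ≤ e ^ T * V T ↑π₁ :=
              mul_le_mul_of_nonneg_left hπ₁.le (by positivity)
          _ ≤ V T π := hprod
      have hIb : e ^ T * (S T / 2) * (ν B).toReal ≤ ∫ π in B, V T π ∂ν := by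
        have h1 : ∀ᵐ π ∂ν.restrict B, e ^ T * (S T / 2) ≤ V T π := by
          filter_upwards [ae_restrict_of_ae hae, ae_restrict_mem hBmeas] with π h1 h2
          exact hlow π h1 h2
        have h2 := integral_mono_ae (integrable_const (e ^ T * (S T / 2)))
          ((hVint T).restrict) h1
        rwa [integral_const, measureReal_restrict_apply_univ, smul_eq_mul, mul_comm] at h2
      have hBI : (∫ π in B, V T π ∂ν) ≤ I T :=
        setIntegral_le_integral (hVint T) (hae.mono fun π hπ => (hVpos T hπ).le)
      calc e ^ T * (S T / 2) * δ ≤ e ^ T * (S T / 2) * (ν B).toReal := by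
            refine mul_le_mul_of_nonneg_left (hδball _ π₁.2) ?_
            have := hSpos T
            positivity
        _ ≤ I T := hIb.trans hBI
    have hIpos : ∀ T, 0 < I T := fun T =>
      lt_of_lt_of_le (by have := hSpos T; positivity) (hkey T)
    -- choose N
    obtain ⟨N₀, hN₀⟩ := exists_nat_gt ((Real.log 2 - Real.log δ) / (ε'/2))
    refine ⟨max N₀ 1, fun T hT => ?_⟩
    have hT1 : 1 ≤ T := le_trans (le_max_right _ _) hT
    have hTpos : (0:ℝ) < T := by exact_mod_cast hT1
    have hdiffnn : 0 ≤ Real.log (S T) - Real.log (I T) := by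
      have h := (Real.log_le_log_iff (hIpos T) (hSpos T)).2 (hIleS T)
      linarith
    have hlogI : T * Real.log e + (Real.log (S T) - Real.log 2) + Real.log δ
        ≤ Real.log (I T) := by
      have hc1 : (0:ℝ) < e ^ T * (S T / 2) := by have := hSpos T; positivity
      have h1 : Real.log (e ^ T * (S T / 2) * δ) ≤ Real.log (I T) :=
        (Real.log_le_log_iff (by positivity) (hIpos T)).2 (hkey T)
      rw [Real.log_mul hc1.ne' hδpos.ne',
        Real.log_mul (by positivity : (0:ℝ) < e ^ T).ne' (by have := hSpos T; positivity :
          (0:ℝ) < S T / 2).ne',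
        Real.log_pow, Real.log_div (hSpos T).ne' (by norm_num : (2:ℝ) ≠ 0)] at h1
      push_cast at h1 ⊢
      linarith
    have hloge : Real.log e = -(ε'/2) := by rw [hedef, Real.log_exp]
    have hdiff_le : Real.log (S T) - Real.log (I T)
        ≤ T * (ε'/2) + (Real.log 2 - Real.log δ) := by
      rw [hloge] at hlogI
      linarith
    have hN₀T : (N₀ : ℝ) ≤ T := by exact_mod_cast le_trans (le_max_left _ _) hT
    have hbound : Real.log 2 - Real.log δ < T * (ε'/2) := by
      rw [div_lt_iff₀ (by linarith : (0:ℝ) < ε'/2)] at hN₀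
      have := mul_le_mul_of_nonneg_right hN₀T (by linarith : (0:ℝ) ≤ ε'/2)
      linarith
    have hfinal : Real.log (S T) - Real.log (I T) < T * ε' := by linarith
    rw [Real.dist_eq, sub_zero,
      abs_of_nonneg (mul_nonneg (by positivity) hdiffnn)]
    have h2 : (1 / (T:ℝ)) * (Real.log (S T) - Real.log (I T)) < (1 / (T:ℝ)) * (T * ε') :=
      mul_lt_mul_of_pos_left hfinal (by positivity)
    calc (1 / (T:ℝ)) * (Real.log (S T) - Real.log (I T)) < (1 / (T:ℝ)) * (T * ε') := h2
      _ = ε' := by field_simp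
  · -- degenerate case : `LM d M` is empty
    push_neg at hM1
    have hempty : LM d M = ∅ := by
      rw [Set.eq_empty_iff_forall_notMem]
      intro f hf
      have hx₀ : (WithLp.toLp 1 (fun _ => (d:ℝ)⁻¹) : L1 d) ∈ openSimplex d := by
        refine ⟨fun i => by positivity, ?_⟩
        show ∑ _i : Fin d, (d:ℝ)⁻¹ = 1
        rw [Finset.sum_const, Finset.card_univ, Fintype.card_fin, nsmul_eq_mul]
        field_simp
      set x₀ : openSimplex d := ⟨_, hx₀⟩
      have hsum := (hf.2 x₀).2
      have hge : ∀ i, 1/(M*d) ≤ f x₀ i := (hf.2 x₀).1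
      have hge' : (d:ℝ) * (1/(M*d)) ≤ ∑ i, f x₀ i := by
        calc (d:ℝ) * (1/(M*d)) = ∑ _i : Fin d, 1/(M*d) := by
              rw [Finset.sum_const, Finset.card_univ, Fintype.card_fin, nsmul_eq_mul]
          _ ≤ _ := Finset.sum_le_sum fun i _ => hge i
      rw [hsum] at hge'
      have h1 : (d:ℝ) * (1/(M*d)) = 1/M := by field_simp
      rw [h1] at hge'
      have h2 : 1 < 1/M := one_lt_one_div hM hM1
      linarith
    haveI : IsEmpty ↥(LM d M) := Set.isEmpty_coe_sort.2 hempty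
    have hres0 : ν.restrict (LM d M) = 0 := by rw [hempty, Measure.restrict_empty]
    have hfun : (fun T : ℕ =>
        (1 / T : ℝ) *
          (Real.log (⨆ π : LM d M,
              ∏ t ∈ Finset.range T,
                ∑ j, (π : BoundedContinuousFunction (openSimplex d) (L1 d)) (μ t) j
                  * ((μ (t + 1) : L1 d) j / (μ t : L1 d) j))
            - Real.log (∫ π in LM d M,
                (∏ t ∈ Finset.range T,
                  ∑ j, π (μ t) j * ((μ (t + 1) : L1 d) j / (μ t : L1 d) j)) ∂ν)))
        = fun _ : ℕ => (0:ℝ) := by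
      funext T
      rw [Real.iSup_of_isEmpty, hres0, integral_zero_measure, Real.log_zero, sub_self, mul_zero]
    rw [hfun]
    exact tendsto_const_nhds
end
end

section
/- Let ρ(x,·) be a transition kernel on the open simplex and let π̂(x) ∈ Δ̄^d maximize p ↦ ∫ log⟨p, y/x⟩ ρ(x,dy) over the closed simplex. Then for every measurable portfolio map π: Δ^d → Δ̄^d and every x ∈ Δ^d, ∫ (⟨π(x), y/x⟩ / ⟨π̂(x), y/x⟩) ρ(x,dy) ≤ 1. -/
open Finset MeasureTheory Filter Topology

theorem stmt_11_aux {Y : Type*} [MeasurableSpace Y] (μ : Measure Y) [IsProbabilityMeasure μ]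
    (a b : Y → ℝ) (hameas : Measurable a) (hbmeas : Measurable b)
    (M : ℝ) (hM : 1 ≤ M)
    (hae : ∀ᵐ y ∂μ, 0 < a y ∧ 0 < b y ∧ a y ≤ M ∧ b y ≤ M)
    (hbint : Integrable (fun y => Real.log (b y)) μ)
    (hopt : ∀ α : ℝ, 0 < α → α < 1 →
      ∫ y, Real.log (α * a y + (1 - α) * b y) ∂μ ≤ ∫ y, Real.log (b y) ∂μ) :
    ∫⁻ y, ENNReal.ofReal (a y / b y) ∂μ ≤ 1 := by
  set α : ℕ → ℝ := fun n => ((n : ℝ) + 2)⁻¹ with hαdef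
  have hα0 : ∀ n, 0 < α n := fun n => by positivity
  have hα1 : ∀ n, α n < 1 := by
    intro n
    rw [hαdef]
    rw [inv_lt_one_iff₀]
    right; linarith [Nat.cast_nonneg (α := ℝ) n]
  have hαlim : Tendsto α atTop (𝓝 0) := by
    apply tendsto_inv_atTop_zero.comp
    exact tendsto_atTop_add_const_right _ 2 tendsto_natCast_atTop_atTop
  have hαne : Tendsto α atTop (𝓝[≠] (0:ℝ)) := by
    rw [tendsto_nhdsWithin_iff]
    exact ⟨hαlim, Eventually.of_forall fun n => (hα0 n).ne'⟩
  set c : ℕ → ℝ := fun n => Real.log (1 - α n) / α n with hcdef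
  set g : ℕ → Y → ℝ := fun n y =>
    (Real.log (α n * a y + (1 - α n) * b y) - Real.log (b y)) / α n - c n with hgdef
  -- limit of c
  have hc : Tendsto c atTop (𝓝 (-1)) := by
    have h1 : HasDerivAt (fun t : ℝ => 1 - t) (-1) 0 := by
      simpa using (hasDerivAt_id (0:ℝ)).const_sub 1
    have hd1 : HasDerivAt (fun t : ℝ => Real.log (1 - t)) (-1) 0 := by
      have := h1.log (by norm_num)
      simpa using this
    have hslope := hasDerivAt_iff_tendsto_slope.mp hd1
    have := hslope.comp hαne
    convert this using 1
    funext n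
    simp [Function.comp, slope_def_field, hcdef]
  -- integrability of the perturbed log
  have hLmeas : ∀ n, Measurable fun y => Real.log (α n * a y + (1 - α n) * b y) :=
    fun n => Real.measurable_log.comp ((hameas.const_mul _).add (hbmeas.const_mul _))
  have hLn_int : ∀ n, Integrable (fun y => Real.log (α n * a y + (1 - α n) * b y)) μ := by
    intro n
    apply Integrable.mono' (g := fun y => (Real.log M + |Real.log (1 - α n)|) + |Real.log (b y)|)
      ((integrable_const _).add hbint.abs) (hLmeas n).aestronglyMeasurable
    filter_upwards [hae] with y hy
    obtain ⟨ha', hb', haM, hbM⟩ := hy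
    have hpos : 0 < α n * a y + (1 - α n) * b y := by nlinarith [hα0 n, hα1 n]
    have hlogM : 0 ≤ Real.log M := Real.log_nonneg hM
    have hup : Real.log (α n * a y + (1 - α n) * b y) ≤ Real.log M := by
      apply Real.log_le_log hpos
      nlinarith [hα0 n, hα1 n]
    have hlow : Real.log (1 - α n) + Real.log (b y)
        ≤ Real.log (α n * a y + (1 - α n) * b y) := by
      rw [← Real.log_mul (by nlinarith [hα1 n]) hb'.ne']
      apply Real.log_le_log (by nlinarith [hα1 n])
      nlinarith [hα0 n]
    have e1 := neg_abs_le (Real.log (1 - α n))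
    have e2 := neg_abs_le (Real.log (b y))
    have e3 := le_abs_self (Real.log (b y))
    have e4 : (0:ℝ) ≤ |Real.log (1 - α n)| := abs_nonneg _
    have e5 : (0:ℝ) ≤ |Real.log (b y)| := abs_nonneg _
    rw [Real.norm_eq_abs, abs_le]
    constructor
    · linarith
    · linarith
  -- nonnegativity of g
  have hg_nonneg : ∀ n, 0 ≤ᵐ[μ] g n := by
    intro n
    filter_upwards [hae] with y hy
    obtain ⟨ha', hb', haM, hbM⟩ := hy
    have hlow : Real.log (1 - α n) + Real.log (b y)
        ≤ Real.log (α n * a y + (1 - α n) * b y) := by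
      rw [← Real.log_mul (by nlinarith [hα1 n]) hb'.ne']
      apply Real.log_le_log (by nlinarith [hα1 n])
      nlinarith [hα0 n]
    simp only [hgdef, Pi.zero_apply, hcdef]
    rw [div_sub_div_same]
    apply div_nonneg _ (hα0 n).le
    linarith
  -- integrability of g
  have hg_int : ∀ n, Integrable (g n) μ :=
    fun n => (((hLn_int n).sub hbint).div_const _).sub (integrable_const _)
  -- integral bound
  have hg_bound : ∀ n, ∫ y, g n y ∂μ ≤ -c n := by
    intro n
    have heq : ∫ y, g n y ∂μ =
        ((∫ y, Real.log (α n * a y + (1 - α n) * b y) ∂μ)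
          - ∫ y, Real.log (b y) ∂μ) / α n - c n := by
      have hint1 : Integrable (fun y =>
          (Real.log (α n * a y + (1 - α n) * b y) - Real.log (b y)) / α n) μ :=
        ((hLn_int n).sub hbint).div_const _
      have hint2 : Integrable (fun y =>
          Real.log (α n * a y + (1 - α n) * b y) - Real.log (b y)) μ :=
        (hLn_int n).sub hbint
      simp only [hgdef]
      rw [integral_sub hint1 (integrable_const _)]
      rw [integral_div, integral_sub (hLn_int n) hbint, integral_const]
      simp
    rw [heq]
    have hle := hopt (α n) (hα0 n) (hα1 n)
    have : ((∫ y, Real.log (α n * a y + (1 - α n) * b y) ∂μ)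
        - ∫ y, Real.log (b y) ∂μ) / α n ≤ 0 :=
      div_nonpos_iff.mpr (Or.inr ⟨sub_nonpos.mpr hle, (hα0 n).le⟩)
    linarith
  -- lintegral bound
  have h1 : ∀ n, ∫⁻ y, ENNReal.ofReal (g n y) ∂μ ≤ ENNReal.ofReal (-c n) := by
    intro n
    rw [← ofReal_integral_eq_lintegral_ofReal (hg_int n) (hg_nonneg n)]
    exact ENNReal.ofReal_le_ofReal (hg_bound n)
  -- measurability of ofReal ∘ g n
  have hmeas_g : ∀ n, Measurable fun y => ENNReal.ofReal (g n y) := by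
    intro n
    exact ((((hLmeas n).sub (Real.measurable_log.comp hbmeas)).div_const _).sub
      measurable_const).ennreal_ofReal
  -- pointwise limit
  have hlim : ∀ᵐ y ∂μ, Tendsto (fun n => g n y) atTop (𝓝 (a y / b y)) := by
    filter_upwards [hae] with y hy
    obtain ⟨ha', hb', haM, hbM⟩ := hy
    have hinner : HasDerivAt (fun t : ℝ => t * a y + (1 - t) * b y) (a y - b y) 0 := by
      have h1 : HasDerivAt (fun t : ℝ => t * a y) (a y) 0 := by
        simpa using (hasDerivAt_id (0:ℝ)).mul_const (a y)
      have h2 : HasDerivAt (fun t : ℝ => (1 - t) * b y) (-(b y)) 0 := by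
        simpa using ((hasDerivAt_id (0:ℝ)).const_sub 1).mul_const (b y)
      exact (h1.add h2).congr_deriv (by ring)
    have hlog : HasDerivAt (fun t : ℝ => Real.log (t * a y + (1 - t) * b y))
        ((a y - b y) / b y) 0 := by
      have := hinner.log (by simpa using hb'.ne')
      simpa using this
    have hslope := (hasDerivAt_iff_tendsto_slope.mp hlog).comp hαne
    have htend := hslope.sub hc
    have heqf : (fun n => g n y) = fun n =>
        (slope (fun t : ℝ => Real.log (t * a y + (1 - t) * b y)) 0 ∘ α) n - c n := by
      funext n
      simp [hgdef, Function.comp, slope_def_field]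
    have hval : (a y - b y) / b y - (-1) = a y / b y := by
      field_simp
      ring
    rw [heqf, ← hval]
    exact htend
  -- conclude via Fatou
  calc ∫⁻ y, ENNReal.ofReal (a y / b y) ∂μ
      = ∫⁻ y, liminf (fun n => ENNReal.ofReal (g n y)) atTop ∂μ := by
        apply lintegral_congr_ae
        filter_upwards [hlim] with y hy
        exact ((ENNReal.continuous_ofReal.tendsto _).comp hy).liminf_eq.symm
    _ ≤ liminf (fun n => ∫⁻ y, ENNReal.ofReal (g n y) ∂μ) atTop :=
        lintegral_liminf_le hmeas_g
    _ ≤ liminf (fun n => ENNReal.ofReal (-c n)) atTop :=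
        liminf_le_liminf (Eventually.of_forall h1)
    _ = 1 := by
        have : Tendsto (fun n => ENNReal.ofReal (-c n)) atTop (𝓝 1) := by
          have h2 : Tendsto (fun n => -c n) atTop (𝓝 1) := by
            simpa using hc.neg
          simpa [Function.comp_def] using (ENNReal.continuous_ofReal.tendsto 1).comp h2
        exact this.liminf_eq


/-- If `π̂(x)` maximizes `p ↦ ∫ log⟨p, y/x⟩ ρ(x,dy)` over the closed simplex, then for any
measurable portfolio map `π` with values in the closed simplex and any `x` in the open
simplex, `∫ ⟨π(x), y/x⟩ / ⟨π̂(x), y/x⟩ ρ(x,dy) ≤ 1`. -/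
theorem stmt_11 (d : ℕ) (hd : 0 < d)
    (ρ : (Fin d → ℝ) → Measure (Fin d → ℝ))
    (hρprob : ∀ x, IsProbabilityMeasure (ρ x))
    (hρsupp : ∀ x, ρ x {y : Fin d → ℝ | ¬ ((∀ j, 0 < y j) ∧ ∑ j, y j = 1)} = 0)
    (π πhat : (Fin d → ℝ) → (Fin d → ℝ)) (hπmeas : Measurable π)
    (hπval : ∀ x : Fin d → ℝ, (∀ j, 0 ≤ π x j) ∧ ∑ j, π x j = 1)
    (x : Fin d → ℝ) (hx : (∀ j, 0 < x j) ∧ ∑ j, x j = 1)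
    (hπhatval : (∀ j, 0 ≤ πhat x j) ∧ ∑ j, πhat x j = 1)
    (hint : Integrable (fun y => Real.log (∑ j, πhat x j * (y j / x j))) (ρ x))
    (hopt : ∀ p : Fin d → ℝ, ((∀ j, 0 ≤ p j) ∧ ∑ j, p j = 1) →
      ∫ y, Real.log (∑ j, p j * (y j / x j)) ∂ρ x
        ≤ ∫ y, Real.log (∑ j, πhat x j * (y j / x j)) ∂ρ x) :
    ∫⁻ y, ENNReal.ofReal
        ((∑ j, π x j * (y j / x j)) / (∑ j, πhat x j * (y j / x j))) ∂ρ x ≤ 1 := by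
  obtain ⟨hx1, hx2⟩ := hx
  obtain ⟨hπ1, hπ2⟩ := hπval x
  obtain ⟨hπh1, hπh2⟩ := hπhatval
  haveI := hρprob x
  -- the a.e. support fact
  have hS : ∀ᵐ y ∂ρ x, (∀ j, 0 < y j) ∧ ∑ j, y j = 1 := by
    rw [MeasureTheory.ae_iff]
    exact hρsupp x
  -- generic facts about sums over the simplex
  have hsum_pos : ∀ (p y : Fin d → ℝ), (∀ j, 0 ≤ p j) → ∑ j, p j = 1 →
      (∀ j, 0 < y j) → 0 < ∑ j, p j * (y j / x j) := by
    intro p y hp hps hy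
    have hex : ∃ j, 0 < p j := by
      by_contra h
      push_neg at h
      have : ∑ j, p j = 0 := Finset.sum_eq_zero fun j _ => le_antisymm (h j) (hp j)
      rw [this] at hps; norm_num at hps
    obtain ⟨j, hj⟩ := hex
    refine Finset.sum_pos' (fun i _ => mul_nonneg (hp i) (div_pos (hy i) (hx1 i)).le)
      ⟨j, Finset.mem_univ j, mul_pos hj (div_pos (hy j) (hx1 j))⟩
  have hsum_le : ∀ (p y : Fin d → ℝ), (∀ j, 0 ≤ p j) → ∑ j, p j = 1 →
      (∀ j, 0 < y j) → ∑ j, y j = 1 → ∑ j, p j * (y j / x j) ≤ ∑ j, (x j)⁻¹ := by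
    intro p y hp hps hy hys
    apply Finset.sum_le_sum
    intro j _
    have hp1 : p j ≤ 1 := by
      rw [← hps]
      exact Finset.single_le_sum (fun i _ => hp i) (Finset.mem_univ j)
    have hy1 : y j ≤ 1 := by
      rw [← hys]
      exact Finset.single_le_sum (fun i _ => (hy i).le) (Finset.mem_univ j)
    calc p j * (y j / x j) ≤ 1 * (1 / x j) := by
          apply mul_le_mul hp1 _ (div_pos (hy j) (hx1 j)).le one_pos.le
          exact div_le_div_of_nonneg_right hy1 (hx1 j).le
      _ = (x j)⁻¹ := by rw [one_mul, one_div]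
  have hM1 : (1:ℝ) ≤ ∑ j, (x j)⁻¹ := by
    have j0 : Fin d := ⟨0, hd⟩
    have hx1' : x j0 ≤ 1 := by
      rw [← hx2]
      exact Finset.single_le_sum (fun i _ => (hx1 i).le) (Finset.mem_univ j0)
    calc (1:ℝ) ≤ (x j0)⁻¹ := (one_le_inv_iff₀).mpr ⟨hx1 j0, hx1'⟩
      _ ≤ ∑ j, (x j)⁻¹ :=
        Finset.single_le_sum (fun i _ => (inv_pos.mpr (hx1 i)).le) (Finset.mem_univ j0)
  have hmeasa : Measurable fun y : Fin d → ℝ => ∑ j, π x j * (y j / x j) :=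
    Finset.measurable_sum _ fun j _ => by fun_prop
  have hmeasb : Measurable fun y : Fin d → ℝ => ∑ j, πhat x j * (y j / x j) :=
    Finset.measurable_sum _ fun j _ => by fun_prop
  have hae' : ∀ᵐ y ∂ρ x, 0 < ∑ j, π x j * (y j / x j) ∧ 0 < ∑ j, πhat x j * (y j / x j) ∧
      (∑ j, π x j * (y j / x j)) ≤ ∑ j, (x j)⁻¹ ∧ (∑ j, πhat x j * (y j / x j)) ≤ ∑ j, (x j)⁻¹ := by
    filter_upwards [hS] with y hy
    exact ⟨hsum_pos (π x) y hπ1 hπ2 hy.1, hsum_pos (πhat x) y hπh1 hπh2 hy.1,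
      hsum_le (π x) y hπ1 hπ2 hy.1 hy.2, hsum_le (πhat x) y hπh1 hπh2 hy.1 hy.2⟩
  have hopt' : ∀ α : ℝ, 0 < α → α < 1 →
      ∫ y, Real.log (α * (∑ j, π x j * (y j / x j))
          + (1 - α) * (∑ j, πhat x j * (y j / x j))) ∂ρ x
        ≤ ∫ y, Real.log (∑ j, πhat x j * (y j / x j)) ∂ρ x := by
    intro α hα0 hα1
    have hp : (∀ j, 0 ≤ α * π x j + (1 - α) * πhat x j) ∧
        ∑ j, (α * π x j + (1 - α) * πhat x j) = 1 := by
      constructor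
      · intro j
        exact add_nonneg (mul_nonneg hα0.le (hπ1 j)) (mul_nonneg (by linarith) (hπh1 j))
      · rw [Finset.sum_add_distrib, ← Finset.mul_sum, ← Finset.mul_sum, hπ2, hπh2]
        ring
    have h := hopt (fun j => α * π x j + (1 - α) * πhat x j) hp
    have heq : (fun y : Fin d → ℝ => Real.log (∑ j, (α * π x j + (1 - α) * πhat x j) * (y j / x j)))
        = fun y : Fin d → ℝ => Real.log (α * (∑ j, π x j * (y j / x j))
            + (1 - α) * (∑ j, πhat x j * (y j / x j))) := by
      funext y
      congr 1
      rw [Finset.mul_sum, Finset.mul_sum, ← Finset.sum_add_distrib]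
      congr 1
      funext j
      ring
    rw [heq] at h
    exact h
  exact stmt_11_aux (ρ x) (fun y => ∑ j, π x j * (y j / x j))
    (fun y => ∑ j, πhat x j * (y j / x j)) hmeasa hmeasb
    (∑ j, (x j)⁻¹) hM1 hae' hint hopt'
end

section
/- Fix T, M, α > 0 and a continuous path (μ_t) in the open simplex admitting a continuous quadratic variation [μ]. Then the map G ↦ V^G_T given by Fernholz's master equation V^G_T = (G(μ_T)/G(μ_0)) exp(−∫_0^T Σ_{i,j} D^{ij}G(μ_t)/(2G(μ_t)) d[μ^i,μ^j]_t) is continuous from (𝓖^{M,α}, ‖·‖_{C^{2,0}}) to ℝ, and in fact |log V^G_T − log V^{G̃}_T| ≤ 2M‖G−G̃‖_{C^{2,0}} + ((M/2)d² + (M³/2)d²)‖G−G̃‖_{C^{2,0}} max_i [μ^i,μ^i]_T. -/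
open Finset MeasureTheory

noncomputable section

/-- Second partial derivative `D^{ij} G (x)`. -/
def D2 (d : ℕ) (G : (Fin d → ℝ) → ℝ) (x : Fin d → ℝ) (i j : Fin d) : ℝ :=
  fderiv ℝ (fderiv ℝ G) x (Pi.single i 1) (Pi.single j 1)

/-- Log-wealth of the functionally generated portfolio of `G` via Fernholz's master
equation, where the quadratic covariations `[μ^i, μ^j]` are represented as
`[μ^i, μ^j]_T = ∫_{[0,T]} c_t^{ij} d𝔪(t)` for a positive-semidefinite matrix-valued
density `c` with respect to a measure `𝔪` on `[0,∞)`. -/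
def logWealth (d : ℕ) (G : (Fin d → ℝ) → ℝ) (μ : ℝ → Fin d → ℝ)
    (𝔪 : Measure ℝ) (c : ℝ → Matrix (Fin d) (Fin d) ℝ) (T : ℝ) : ℝ :=
  Real.log (G (μ T)) - Real.log (G (μ 0))
    - ∫ t in Set.Icc 0 T, (∑ i, ∑ j, D2 d G (μ t) i j * c t i j / (2 * G (μ t))) ∂𝔪

lemma log_lip {M a b : ℝ} (hM : 0 < M) (ha : 1/M ≤ a) (hb : 1/M ≤ b) :
    |Real.log a - Real.log b| ≤ M * |a - b| := by
  have hMi : 0 < 1/M := by positivity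
  have ha' : 0 < a := lt_of_lt_of_le hMi ha
  have hb' : 0 < b := lt_of_lt_of_le hMi hb
  have key : ∀ x y : ℝ, 0 < x → 0 < y → 1/M ≤ y → Real.log x - Real.log y ≤ M * |x - y| := by
    intro x y hx hy hMy
    have h1 : Real.log x - Real.log y = Real.log (x / y) := (Real.log_div hx.ne' hy.ne').symm
    have h2 : Real.log (x / y) ≤ x / y - 1 := Real.log_le_sub_one_of_pos (by positivity)
    have h3 : x / y - 1 = (x - y) / y := by field_simp
    have h4 : (x - y) / y ≤ M * |x - y| := by
      rw [div_le_iff₀ hy]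
      calc x - y ≤ |x - y| := le_abs_self _
        _ = |x - y| * 1 := (mul_one _).symm
        _ ≤ |x - y| * (M * y) := by
            apply mul_le_mul_of_nonneg_left _ (abs_nonneg _)
            have := (div_le_iff₀' hM).mp hMy
            nlinarith
        _ = M * |x - y| * y := by ring
    linarith
  rw [abs_sub_le_iff]
  exact ⟨key a b ha' hb' hb, by simpa [abs_sub_comm] using key b a hb' ha' ha⟩

lemma psd_entry {d : ℕ} (A : Matrix (Fin d) (Fin d) ℝ) (hA : A.PosSemidef) (i j : Fin d) :
    |A i j| ≤ (A i i + A j j) / 2 := by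
  have hsym : A j i = A i j := by
    have h := hA.1
    rw [Matrix.IsHermitian] at h
    have h2 := congrFun (congrFun h i) j
    simpa [Matrix.conjTranspose_apply] using h2
  have h1 := hA.dotProduct_mulVec_nonneg (Pi.single i 1 + Pi.single j 1)
  have h2 := hA.dotProduct_mulVec_nonneg (Pi.single i 1 - Pi.single j 1)
  simp only [star_trivial, Matrix.mulVec_add, Matrix.mulVec_sub, Matrix.mulVec_single,
    add_dotProduct, sub_dotProduct, single_dotProduct, Pi.add_apply,
    Pi.sub_apply, mul_one, one_mul, MulOpposite.op_one, one_smul, Matrix.col_apply] at h1 h2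
  rw [abs_le]
  constructor <;> nlinarith [hsym]

lemma D2_eq {d : ℕ} (f : (Fin d → ℝ) → ℝ) (x : Fin d → ℝ) (i j : Fin d) :
    D2 d f x i j = iteratedFDeriv ℝ 2 f x ![Pi.single i 1, Pi.single j 1] := by
  rw [iteratedFDeriv_two_apply]
  simp [D2]

lemma D2_sub {d : ℕ} {G Gt : (Fin d → ℝ) → ℝ} (hG : ContDiff ℝ 2 G) (hGt : ContDiff ℝ 2 Gt)
    (x : Fin d → ℝ) (i j : Fin d) :
    D2 d (fun z => G z - Gt z) x i j = D2 d G x i j - D2 d Gt x i j := by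
  have hG' : ContDiff ℝ ((2:ℕ):ℕ∞) G := by exact_mod_cast hG
  have hGt' : ContDiff ℝ ((2:ℕ):ℕ∞) Gt := by exact_mod_cast hGt
  have hfun : (fun z => G z - Gt z) = G + (-Gt) := by
    funext z; simp [sub_eq_add_neg]
  have hneg : ContDiff ℝ ((2:ℕ):ℕ∞) (-Gt) := hGt'.neg
  rw [D2_eq, D2_eq, D2_eq, hfun, iteratedFDeriv_add_apply hG'.contDiffAt hneg.contDiffAt]
  simp [iteratedFDeriv_neg_apply, sub_eq_add_neg]

lemma D2_le {d : ℕ} (f : (Fin d → ℝ) → ℝ) (x : Fin d → ℝ) (i j : Fin d) :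
    |D2 d f x i j| ≤ ‖iteratedFDeriv ℝ 2 f x‖ := by
  rw [D2_eq, ← Real.norm_eq_abs]
  calc ‖iteratedFDeriv ℝ 2 f x ![Pi.single i 1, Pi.single j 1]‖
      ≤ ‖iteratedFDeriv ℝ 2 f x‖ *
          ∏ k : Fin 2, ‖(![Pi.single i 1, Pi.single j 1] : Fin 2 → Fin d → ℝ) k‖ :=
        (iteratedFDeriv ℝ 2 f x).le_opNorm _
    _ = ‖iteratedFDeriv ℝ 2 f x‖ := by
        rw [Fin.prod_univ_two]
        simp [Pi.norm_single]

lemma term_bound {M N a b g gt cij : ℝ} (hM : 0 < M) (hN : 0 ≤ N)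
    (hg : 1/M ≤ g) (hgt : 1/M ≤ gt) (hb : |b| ≤ M)
    (hsub : |a - b| ≤ N) (hgd : |g - gt| ≤ N) :
    |a * cij / (2*g) - b * cij / (2*gt)| ≤ (M*N + M^3*N)/2 * |cij| := by
  have hg0 : 0 < g := lt_of_lt_of_le (by positivity) hg
  have hgt0 : 0 < gt := lt_of_lt_of_le (by positivity) hgt
  have h1g : 1 ≤ M * g := by have := (div_le_iff₀' hM).mp hg; linarith
  have h1gt : 1 ≤ M * gt := by have := (div_le_iff₀' hM).mp hgt; linarith
  have hident : a * cij/(2*g) - b * cij/(2*gt)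
      = (cij/2) * ((a - b)/g + b * (gt - g)/(gt*g)) := by
    field_simp; ring
  rw [hident, abs_mul]
  have h1 : |(a - b)/g| ≤ N * M := by
    rw [abs_div, abs_of_pos hg0, div_le_iff₀ hg0]
    nlinarith [abs_nonneg (a - b)]
  have h2 : |b * (gt - g)/(gt*g)| ≤ M * N * (M*M) := by
    rw [abs_div, abs_mul, abs_of_pos (mul_pos hgt0 hg0), div_le_iff₀ (mul_pos hgt0 hg0)]
    have e1 : |b| * |gt - g| ≤ M * N :=
      mul_le_mul hb (by rwa [abs_sub_comm]) (abs_nonneg _) hM.le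
    have h3 : (1:ℝ) ≤ (M*g)*(M*gt) := by nlinarith
    have h4 : M*N*1 ≤ M*N*((M*g)*(M*gt)) :=
      mul_le_mul_of_nonneg_left h3 (mul_nonneg hM.le hN)
    nlinarith [h4]
  calc |cij/2| * |(a - b)/g + b * (gt - g)/(gt*g)|
      ≤ |cij/2| * (|(a - b)/g| + |b * (gt - g)/(gt*g)|) :=
        mul_le_mul_of_nonneg_left (abs_add_le _ _) (abs_nonneg _)
    _ ≤ |cij/2| * (N*M + M*N*(M*M)) :=
        mul_le_mul_of_nonneg_left (by linarith) (abs_nonneg _)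
    _ = (M*N + M^3*N)/2 * |cij| := by rw [abs_div]; norm_num; ring

lemma double_sum_diag {d : ℕ} (K : ℝ) (a : Fin d → ℝ) :
    ∑ i, ∑ j, K * ((a i + a j)/2) = K * ↑d * ∑ i, a i := by
  have h1 : ∀ i : Fin d, ∑ j, K * ((a i + a j)/2) = (↑d * (K/2)) * a i + K/2 * ∑ j, a j := by
    intro i
    have h : ∀ j : Fin d, K * ((a i + a j)/2) = K/2 * a i + K/2 * a j := fun j => by ring
    simp_rw [h]
    rw [Finset.sum_add_distrib, Finset.sum_const, ← Finset.mul_sum]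
    simp [Finset.card_univ, nsmul_eq_mul]; ring
  simp_rw [h1]
  rw [Finset.sum_add_distrib, ← Finset.mul_sum, Finset.sum_const]
  simp only [Finset.card_univ, Fintype.card_fin, nsmul_eq_mul]
  ring

lemma abs_sub_sub_le (x y z : ℝ) : |x - y - z| ≤ |x| + |y| + |z| := by
  have h1 := abs_add_le (x - y) (-z)
  have h2 := abs_add_le x (-y)
  simp only [abs_neg, ← sub_eq_add_neg] at h1 h2
  linarith

/-- Continuity (with an explicit modulus) of `G ↦ log V^G_T` on `𝓖^{M,α}` with respect to
the `C^{2,0}`-norm: if `N` bounds `‖G - G̃‖_{C^{2,0}}` then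
`|log V^G_T - log V^{G̃}_T| ≤ 2 M N + ((M/2) d² + (M³/2) d²) N · max_i [μ^i,μ^i]_T`. -/
theorem stmt_16 (d : ℕ) (hd : 0 < d) (M α : ℝ) (hM : 0 < M) (hα : 0 < α) (hα1 : α ≤ 1)
    (T : ℝ) (hT : 0 < T)
    (μ : ℝ → Fin d → ℝ) (hμcont : Continuous μ)
    (hμval : ∀ t, (∀ i, 0 < μ t i) ∧ ∑ i, μ t i = 1)
    (𝔪 : Measure ℝ) [IsLocallyFiniteMeasure 𝔪]
    (c : ℝ → Matrix (Fin d) (Fin d) ℝ) (hcmeas : ∀ i j, Measurable fun t => c t i j)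
    (hcpsd : ∀ t, (c t).PosSemidef)
    (hcint : ∀ i j, IntegrableOn (fun t => c t i j) (Set.Icc 0 T) 𝔪)
    (G Gt : (Fin d → ℝ) → ℝ) (hG : ContDiff ℝ 2 G) (hGt : ContDiff ℝ 2 Gt)
    (hGconc : ConcaveOn ℝ {x : Fin d → ℝ | (∀ i, 0 ≤ x i) ∧ ∑ i, x i = 1} G)
    (hGtconc : ConcaveOn ℝ {x : Fin d → ℝ | (∀ i, 0 ≤ x i) ∧ ∑ i, x i = 1} Gt)
    (hGlow : ∀ x : Fin d → ℝ, ((∀ i, 0 ≤ x i) ∧ ∑ i, x i = 1) → 1 / M ≤ G x)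
    (hGtlow : ∀ x : Fin d → ℝ, ((∀ i, 0 ≤ x i) ∧ ∑ i, x i = 1) → 1 / M ≤ Gt x)
    (hGbd : ∀ k : ℕ, k ≤ 2 → ∀ x : Fin d → ℝ, ((∀ i, 0 ≤ x i) ∧ ∑ i, x i = 1) →
      ‖iteratedFDeriv ℝ k G x‖ ≤ M)
    (hGtbd : ∀ k : ℕ, k ≤ 2 → ∀ x : Fin d → ℝ, ((∀ i, 0 ≤ x i) ∧ ∑ i, x i = 1) →
      ‖iteratedFDeriv ℝ k Gt x‖ ≤ M)
    (hGhold : ∀ x y : Fin d → ℝ, ((∀ i, 0 ≤ x i) ∧ ∑ i, x i = 1) →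
      ((∀ i, 0 ≤ y i) ∧ ∑ i, y i = 1) →
      ‖iteratedFDeriv ℝ 2 G x - iteratedFDeriv ℝ 2 G y‖ ≤ M * ‖x - y‖ ^ α)
    (hGthold : ∀ x y : Fin d → ℝ, ((∀ i, 0 ≤ x i) ∧ ∑ i, x i = 1) →
      ((∀ i, 0 ≤ y i) ∧ ∑ i, y i = 1) →
      ‖iteratedFDeriv ℝ 2 Gt x - iteratedFDeriv ℝ 2 Gt y‖ ≤ M * ‖x - y‖ ^ α)
    (hintG : IntegrableOn
      (fun t => ∑ i, ∑ j, D2 d G (μ t) i j * c t i j / (2 * G (μ t))) (Set.Icc 0 T) 𝔪)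
    (hintGt : IntegrableOn
      (fun t => ∑ i, ∑ j, D2 d Gt (μ t) i j * c t i j / (2 * Gt (μ t))) (Set.Icc 0 T) 𝔪)
    (N : ℝ)
    (hN : ∀ k : ℕ, k ≤ 2 → ∀ x : Fin d → ℝ, ((∀ i, 0 ≤ x i) ∧ ∑ i, x i = 1) →
      ‖iteratedFDeriv ℝ k (fun z => G z - Gt z) x‖ ≤ N) :
    |logWealth d G μ 𝔪 c T - logWealth d Gt μ 𝔪 c T|
      ≤ 2 * M * N + ((M / 2) * d ^ 2 + (M ^ 3 / 2) * d ^ 2) * N *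
          (⨆ i : Fin d, ∫ t in Set.Icc 0 T, c t i i ∂𝔪) := by
  have hmem : ∀ t, (∀ i, 0 ≤ μ t i) ∧ ∑ i, μ t i = 1 :=
    fun t => ⟨fun i => ((hμval t).1 i).le, (hμval t).2⟩
  have hN0 : 0 ≤ N := le_trans (norm_nonneg _) (hN 0 (by norm_num) (μ 0) (hmem 0))
  have hGdiff : ∀ t : ℝ, |G (μ t) - Gt (μ t)| ≤ N := by
    intro t
    have h := hN 0 (by norm_num) (μ t) (hmem t)
    rwa [norm_iteratedFDeriv_zero, Real.norm_eq_abs] at h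
  have hlog : ∀ t : ℝ, |Real.log (G (μ t)) - Real.log (Gt (μ t))| ≤ M * N := by
    intro t
    refine (log_lip hM (hGlow _ (hmem t)) (hGtlow _ (hmem t))).trans ?_
    exact mul_le_mul_of_nonneg_left (hGdiff t) hM.le
  have hD2diff : ∀ (t : ℝ) (i j : Fin d), |D2 d G (μ t) i j - D2 d Gt (μ t) i j| ≤ N := by
    intro t i j
    rw [← D2_sub hG hGt]
    exact (D2_le _ _ i j).trans (hN 2 le_rfl (μ t) (hmem t))
  have hD2Gt : ∀ (t : ℝ) (i j : Fin d), |D2 d Gt (μ t) i j| ≤ M :=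
    fun t i j => (D2_le _ _ i j).trans (hGtbd 2 le_rfl (μ t) (hmem t))
  set K2 : ℝ := (M*N + M^3*N)/2 with hK2
  have hK2nn : 0 ≤ K2 := by positivity
  set f1 : ℝ → ℝ := fun t => ∑ i, ∑ j, D2 d G (μ t) i j * c t i j / (2 * G (μ t)) with hf1
  set f2 : ℝ → ℝ := fun t => ∑ i, ∑ j, D2 d Gt (μ t) i j * c t i j / (2 * Gt (μ t)) with hf2
  have hptw : ∀ t, |f1 t - f2 t| ≤ K2 * ↑d * ∑ i, c t i i := by
    intro t
    have hterm : ∀ i j : Fin d,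
        |D2 d G (μ t) i j * c t i j / (2 * G (μ t))
          - D2 d Gt (μ t) i j * c t i j / (2 * Gt (μ t))|
          ≤ K2 * ((c t i i + c t j j)/2) := by
      intro i j
      have h1 := term_bound (a := D2 d G (μ t) i j) (b := D2 d Gt (μ t) i j)
        (cij := c t i j) hM hN0 (hGlow _ (hmem t)) (hGtlow _ (hmem t))
        (hD2Gt t i j) (hD2diff t i j) (hGdiff t)
      refine h1.trans ?_
      exact mul_le_mul_of_nonneg_left (psd_entry _ (hcpsd t) i j) hK2nn
    calc |f1 t - f2 t|
        = |∑ i, ∑ j, (D2 d G (μ t) i j * c t i j / (2 * G (μ t))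
            - D2 d Gt (μ t) i j * c t i j / (2 * Gt (μ t)))| := by
          simp only [hf1, hf2, Finset.sum_sub_distrib]
      _ ≤ ∑ i, ∑ j, |D2 d G (μ t) i j * c t i j / (2 * G (μ t))
            - D2 d Gt (μ t) i j * c t i j / (2 * Gt (μ t))| := by
          refine (Finset.abs_sum_le_sum_abs _ _).trans ?_
          exact Finset.sum_le_sum fun i _ => Finset.abs_sum_le_sum_abs _ _
      _ ≤ ∑ i, ∑ j, K2 * ((c t i i + c t j j)/2) :=
          Finset.sum_le_sum fun i _ => Finset.sum_le_sum fun j _ => hterm i j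
      _ = K2 * ↑d * ∑ i, c t i i := double_sum_diag K2 (fun i => c t i i)
  have hbint : IntegrableOn (fun t => K2 * ↑d * ∑ i, c t i i) (Set.Icc 0 T) 𝔪 :=
    (integrable_finset_sum _ (fun i _ => hcint i i)).const_mul _
  have hsubint : IntegrableOn (fun t => f1 t - f2 t) (Set.Icc 0 T) 𝔪 := hintG.sub hintGt
  have hintd : |(∫ t in Set.Icc 0 T, f1 t ∂𝔪) - ∫ t in Set.Icc 0 T, f2 t ∂𝔪|
      ≤ K2 * ↑d * ∑ i, ∫ t in Set.Icc 0 T, c t i i ∂𝔪 := by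
    rw [← integral_sub hintG hintGt]
    calc |∫ t in Set.Icc 0 T, (f1 t - f2 t) ∂𝔪|
        ≤ ∫ t in Set.Icc 0 T, |f1 t - f2 t| ∂𝔪 := by
          simpa [Real.norm_eq_abs] using
            norm_integral_le_integral_norm (μ := 𝔪.restrict (Set.Icc 0 T))
              (fun t => f1 t - f2 t)
      _ ≤ ∫ t in Set.Icc 0 T, K2 * ↑d * ∑ i, c t i i ∂𝔪 :=
          integral_mono hsubint.abs hbint (fun t => hptw t)
      _ = K2 * ↑d * ∑ i, ∫ t in Set.Icc 0 T, c t i i ∂𝔪 := by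
          rw [integral_const_mul, integral_finset_sum _ (fun i _ => hcint i i)]
  set S := ⨆ i : Fin d, ∫ t in Set.Icc 0 T, c t i i ∂𝔪 with hS
  have hsumS : ∑ i : Fin d, ∫ t in Set.Icc 0 T, c t i i ∂𝔪 ≤ ↑d * S := by
    calc ∑ i : Fin d, ∫ t in Set.Icc 0 T, c t i i ∂𝔪
        ≤ ∑ _i : Fin d, S :=
          Finset.sum_le_sum fun i _ =>
            le_ciSup (f := fun i : Fin d => ∫ t in Set.Icc 0 T, c t i i ∂𝔪)
              (Set.Finite.bddAbove (Set.finite_range _)) i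
      _ = ↑d * S := by
          simp [Finset.sum_const, Finset.card_univ, nsmul_eq_mul]
  have hexp : logWealth d G μ 𝔪 c T - logWealth d Gt μ 𝔪 c T
      = (Real.log (G (μ T)) - Real.log (Gt (μ T)))
        - (Real.log (G (μ 0)) - Real.log (Gt (μ 0)))
        - ((∫ t in Set.Icc 0 T, f1 t ∂𝔪) - ∫ t in Set.Icc 0 T, f2 t ∂𝔪) := by
    simp only [logWealth, hf1, hf2]; ring
  have hmain : |logWealth d G μ 𝔪 c T - logWealth d Gt μ 𝔪 c T|
      ≤ M*N + M*N + K2 * ↑d * (↑d * S) := by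
    rw [hexp]
    refine (abs_sub_sub_le _ _ _).trans ?_
    have h3 : K2 * ↑d * ∑ i, ∫ t in Set.Icc 0 T, c t i i ∂𝔪 ≤ K2 * ↑d * (↑d * S) :=
      mul_le_mul_of_nonneg_left hsumS (by positivity)
    have := hlog T
    have := hlog 0
    linarith [hintd]
  refine hmain.trans (le_of_eq ?_)
  push_cast
  ring
end
end
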